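/- (Trigonometric cancellation) Let r₁, r₂ ≥ 0 and θ₁, θ₂ ∈ ℝ with θ := θ₁ − θ₂ satisfying cos θ ≤ 1/2. Then with η₀ = (√7 − 1)/2, one has |r₁ e^{iθ₁} + r₂ e^{iθ₂}| ≤ max{η₀ r₁ + r₂, r₁ + η₀ r₂}. -/

import Mathlib

/-- Trigonometric cancellation lemma: if `cos(θ₁ − θ₂) ≤ 1/2` then with
`η₀ = (√7 − 1)/2`, `|r₁e^{iθ₁} + r₂e^{iθ₂}| ≤ max{η₀r₁ + r₂, r₁ + η₀r₂}`. -/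
theorem stmt4 (r₁ r₂ θ₁ θ₂ : ℝ) (h1 : 0 ≤ r₁) (h2 : 0 ≤ r₂)
    (hcos : Real.cos (θ₁ - θ₂) ≤ 1 / 2) :
    ‖(r₁ : ℂ) * Complex.exp (θ₁ * Complex.I) + (r₂ : ℂ) * Complex.exp (θ₂ * Complex.I)‖
      ≤ max ((Real.sqrt 7 - 1) / 2 * r₁ + r₂) (r₁ + (Real.sqrt 7 - 1) / 2 * r₂) := by
  set s := Real.sqrt 7 with hs
  have hs2 : s ^ 2 = 7 := Real.sq_sqrt (by norm_num)
  have hsge : (2 : ℝ) ≤ s := by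
    nlinarith [Real.sqrt_nonneg 7]
  set z : ℂ := (r₁ : ℂ) * Complex.exp (θ₁ * Complex.I) + (r₂ : ℂ) * Complex.exp (θ₂ * Complex.I)
    with hz
  have hnsq : ‖z‖ ^ 2 = r₁ ^ 2 + r₂ ^ 2 + 2 * r₁ * r₂ * Real.cos (θ₁ - θ₂) := by
    rw [Complex.sq_norm, hz, Complex.normSq_apply]
    simp only [Complex.add_re, Complex.add_im, Complex.mul_re,
      Complex.mul_im, Complex.ofReal_re, Complex.ofReal_im, Complex.exp_ofReal_mul_I_re,
      Complex.exp_ofReal_mul_I_im, Real.cos_sub]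
    ring_nf
    nlinarith [Real.sin_sq_add_cos_sq θ₁, Real.sin_sq_add_cos_sq θ₂]
  set M := max ((s - 1) / 2 * r₁ + r₂) (r₁ + (s - 1) / 2 * r₂) with hM
  have hMnn : 0 ≤ M := le_trans (by nlinarith) (le_max_right _ _ : r₁ + (s-1)/2*r₂ ≤ M)
  have key : ‖z‖ ^ 2 ≤ M ^ 2 := by
    rcases le_total r₁ (2 * r₂) with hc | hc
    · have hb : ((s - 1) / 2 * r₁ + r₂) ≤ M := le_max_left _ _
      have hb2 : ((s - 1) / 2 * r₁ + r₂) ^ 2 ≤ M ^ 2 := by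
        have : 0 ≤ (s - 1) / 2 * r₁ + r₂ := by nlinarith
        nlinarith
      refine le_trans ?_ hb2
      rw [hnsq]
      nlinarith [mul_nonneg (mul_nonneg (by linarith : (0:ℝ) ≤ s - 2) h1) (by linarith : (0:ℝ) ≤ 2 * r₂ - r₁), mul_nonneg (mul_nonneg h1 h2) (by linarith : (0:ℝ) ≤ 1/2 - Real.cos (θ₁ - θ₂))]
    · have hb : (r₁ + (s - 1) / 2 * r₂) ≤ M := le_max_right _ _
      have hb2 : (r₁ + (s - 1) / 2 * r₂) ^ 2 ≤ M ^ 2 := by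
        have : 0 ≤ r₁ + (s - 1) / 2 * r₂ := by nlinarith
        nlinarith
      refine le_trans ?_ hb2
      rw [hnsq]
      nlinarith [mul_nonneg (mul_nonneg (by linarith : (0:ℝ) ≤ s - 2) h2) (by linarith : (0:ℝ) ≤ 2 * r₁ - r₂), mul_nonneg (mul_nonneg h1 h2) (by linarith : (0:ℝ) ≤ 1/2 - Real.cos (θ₁ - θ₂))]
  nlinarith [norm_nonneg z]
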